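/- Let v ∈ ℓ²(ℕ; ℝ) and let α : ℕ → ℝ with α_j ≥ 0 for all j, and define u* ∈ ℓ²(ℕ; ℝ) by u*_j = S_{α_j}(v_j). If u ∈ ℓ²(ℕ; ℝ) satisfies (1/2)‖u − v‖² + Σ_{j=0}^∞ α_j |u_j| ≤ (1/2)‖w − v‖² + Σ_{j=0}^∞ α_j |w_j| for all w ∈ ℓ²(ℕ; ℝ) (penalty sums taken in [0, ∞]), then u = u*. -/

import Mathlib

/-- The soft thresholding (soft shrinkage) map with threshold `β`:
`S_β(x) = sign(x) * max (|x| - β) 0`, where `sign(0) = 0`. -/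
noncomputable def softThreshold (β x : ℝ) : ℝ := Real.sign x * max (|x| - β) 0

lemma softThreshold_key (β c : ℝ) (hβ : 0 ≤ β) (x : ℝ) :
    (1/2)*(softThreshold β c - c)^2 + β * |softThreshold β c|
      + (1/2)*(x - softThreshold β c)^2 ≤ (1/2)*(x - c)^2 + β * |x| := by
  rcases le_or_gt (|c|) β with hc | hc
  · have hS : softThreshold β c = 0 := by
      unfold softThreshold
      rw [max_eq_right (by linarith), mul_zero]
    rw [hS]
    have h1 : x * c ≤ |x| * β := by
      calc x * c ≤ |x * c| := le_abs_self _
        _ = |x| * |c| := abs_mul _ _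
        _ ≤ |x| * β := by
          have := abs_nonneg x; nlinarith
    simp only [abs_zero, mul_zero]
    nlinarith [abs_nonneg x]
  · rcases le_or_gt 0 c with h0 | h0
    · have hcpos : 0 < c := lt_of_le_of_lt hβ (by rwa [abs_of_nonneg h0] at hc)
      have hS : softThreshold β c = c - β := by
        unfold softThreshold
        rw [Real.sign_of_pos hcpos, abs_of_pos hcpos,
          max_eq_left (by rw [abs_of_pos hcpos] at hc; linarith), one_mul]
      rw [hS]
      have hSa : |c - β| = c - β := abs_of_nonneg (by rw [abs_of_pos hcpos] at hc; linarith)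
      rw [hSa]
      have h1 : β * x ≤ β * |x| := by
        have := le_abs_self x; nlinarith
      nlinarith
    · have hcneg : c < 0 := h0
      have habs : |c| = -c := abs_of_neg hcneg
      have hS : softThreshold β c = c + β := by
        unfold softThreshold
        rw [Real.sign_of_neg hcneg, habs,
          max_eq_left (by rw [habs] at hc; linarith)]
        ring
      rw [hS]
      have hSa : |c + β| = -(c + β) := abs_of_nonpos (by rw [habs] at hc; linarith)
      rw [hSa]
      have h1 : β * (-x) ≤ β * |x| := by
        have := neg_le_abs x; nlinarith
      nlinarith

lemma lp_norm_sq (g : lp (fun _ : ℕ => ℝ) 2) : ‖g‖ ^ 2 = ∑' i, (g i) ^ 2 := by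
  have hp : 0 < (2 : ENNReal).toReal := by norm_num
  have h := lp.norm_rpow_eq_tsum hp g
  have h2 : (2 : ENNReal).toReal = (2 : ℝ) := by norm_num
  rw [h2] at h
  have hl : ∀ y : ℝ, y ^ (2 : ℝ) = y ^ 2 := fun y => by
    rw [show (2 : ℝ) = ((2 : ℕ) : ℝ) by norm_num, Real.rpow_natCast]
  rw [hl] at h
  rw [h]
  refine tsum_congr fun i => ?_
  rw [hl]
  simp [Real.norm_eq_abs, sq_abs]

lemma lp_sq_summable (g : lp (fun _ : ℕ => ℝ) 2) : Summable (fun i => (g i) ^ 2) := by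
  have hp : 0 < (2 : ENNReal).toReal := by norm_num
  have h := (lp.memℓp g).summable hp
  have h2 : (2 : ENNReal).toReal = (2 : ℝ) := by norm_num
  rw [h2] at h
  refine h.congr fun i => ?_
  rw [show (2 : ℝ) = ((2 : ℕ) : ℝ) by norm_num, Real.rpow_natCast]
  simp [Real.norm_eq_abs, sq_abs]

lemma ennreal_tsum_extract (f : ℕ → ENNReal) (j : ℕ) :
    ∑' i, f i = f j + ∑' i, if i = j then 0 else f i := by
  rw [ENNReal.tsum_eq_add_tsum_ite j]
  congr 1
  exact tsum_congr fun i => by split_ifs <;> rfl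

/-- Uniqueness of the minimizer in `ℓ²(ℕ; ℝ)`: if `u ∈ ℓ²(ℕ; ℝ)` minimizes
`(1/2)‖· − v‖² + Σ_j α_j |·_j|` (penalty sums in `[0, ∞]`), then `u` is the
coefficientwise soft-thresholded sequence `u_j = S_{α_j}(v_j)`. -/
theorem softThreshold_lp_uniqueMinimizer (v : lp (fun _ : ℕ => ℝ) 2) (α : ℕ → ℝ)
    (hα : ∀ j, 0 ≤ α j) (u : lp (fun _ : ℕ => ℝ) 2)
    (hu : ∀ w : lp (fun _ : ℕ => ℝ) 2,
      ENNReal.ofReal ((1 / 2) * ‖u - v‖ ^ 2) + ∑' j, ENNReal.ofReal (α j * |u j|) ≤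
        ENNReal.ofReal ((1 / 2) * ‖w - v‖ ^ 2) + ∑' j, ENNReal.ofReal (α j * |w j|)) :
    ∀ j, u j = softThreshold (α j) (v j) := by
  -- Step 1: the penalty sum for u is finite.
  have hfin : (∑' i, ENNReal.ofReal (α i * |u i|)) ≠ ⊤ := by
    have h0 := hu 0
    have hz : ∀ i, (0 : lp (fun _ : ℕ => ℝ) 2) i = 0 := fun i => rfl
    simp only [hz, abs_zero, mul_zero, ENNReal.ofReal_zero, tsum_zero, add_zero] at h0
    intro htop
    rw [htop, add_top] at h0
    exact (lt_irrefl _ (lt_of_le_of_lt h0 (ENNReal.ofReal_lt_top))).elim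
  intro j
  -- Step 2: coordinatewise minimization inequality
  have key : ∀ x : ℝ,
      (1/2) * (u j - v j) ^ 2 + α j * |u j| ≤ (1/2) * (x - v j) ^ 2 + α j * |x| := by
    intro x
    set w : lp (fun _ : ℕ => ℝ) 2 := u + lp.single 2 j (x - u j) with hwdef
    have hwj : w j = x := by
      simp [hwdef, lp.single_apply_self]
    have hwi : ∀ i, i ≠ j → w i = u i := by
      intro i hi
      simp [hwdef, lp.single_apply_ne 2 j _ hi, Pi.single_apply, hi]
    have hw := hu w
    -- decompose penalty sums
    have hdecu : (∑' i, ENNReal.ofReal (α i * |u i|)) =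
        ENNReal.ofReal (α j * |u j|) +
          ∑' i, if i = j then 0 else ENNReal.ofReal (α i * |u i|) :=
      ennreal_tsum_extract (fun i => ENNReal.ofReal (α i * |u i|)) j
    have hdecw : (∑' i, ENNReal.ofReal (α i * |w i|)) =
        ENNReal.ofReal (α j * |x|) +
          ∑' i, if i = j then 0 else ENNReal.ofReal (α i * |u i|) := by
      rw [ennreal_tsum_extract (fun i => ENNReal.ofReal (α i * |w i|)) j, hwj]
      congr 1
      refine tsum_congr fun i => ?_
      by_cases hi : i = j
      · simp [hi]
      · simp [hi, hwi i hi]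
    have hTfin : (∑' i, if i = j then 0 else ENNReal.ofReal (α i * |u i|)) ≠ ⊤ := by
      intro htop
      rw [hdecu, htop, add_top] at hfin
      exact hfin rfl
    -- decompose norms
    have hnu : ‖u - v‖ ^ 2 = ((u : ∀ _, ℝ) j - v j) ^ 2 +
        ∑' i, if i = j then 0 else (((u - v) : lp (fun _ : ℕ => ℝ) 2) i) ^ 2 := by
      rw [lp_norm_sq, Summable.tsum_eq_add_tsum_ite (lp_sq_summable (u - v)) j]
      congr 1
    have hnw : ‖w - v‖ ^ 2 = (x - v j) ^ 2 +
        ∑' i, if i = j then 0 else (((u - v) : lp (fun _ : ℕ => ℝ) 2) i) ^ 2 := by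
      rw [lp_norm_sq, Summable.tsum_eq_add_tsum_ite (lp_sq_summable (w - v)) j]
      congr 1
      · simp [hwj]
      · refine tsum_congr fun i => ?_
        by_cases hi : i = j
        · simp [hi]
        · simp [hi, hwi i hi]
    -- cancel the common tail of penalty sums
    rw [hdecu, hdecw, ← add_assoc, ← add_assoc] at hw
    have hw2 := (ENNReal.add_le_add_iff_right hTfin).mp hw
    -- convert to reals
    have h1 : 0 ≤ (1/2 : ℝ) * ‖u - v‖ ^ 2 := by positivity
    have h2 : 0 ≤ α j * |u j| := mul_nonneg (hα j) (abs_nonneg _)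
    have h3 : 0 ≤ (1/2 : ℝ) * ‖w - v‖ ^ 2 := by positivity
    have h4 : 0 ≤ α j * |x| := mul_nonneg (hα j) (abs_nonneg _)
    rw [← ENNReal.ofReal_add h1 h2, ← ENNReal.ofReal_add h3 h4] at hw2
    have hw3 : (1/2 : ℝ) * ‖u - v‖ ^ 2 + α j * |u j| ≤
        (1/2 : ℝ) * ‖w - v‖ ^ 2 + α j * |x| :=
      (ENNReal.ofReal_le_ofReal_iff (by positivity)).mp hw2
    rw [hnu, hnw] at hw3
    linarith
  -- Step 3: combine with the soft-threshold key inequality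
  set S := softThreshold (α j) (v j) with hSdef
  have h1 := key S
  have h2 := softThreshold_key (α j) (v j) (hα j) (u j)
  rw [← hSdef] at h2
  have : (1/2 : ℝ) * (u j - S) ^ 2 ≤ 0 := by linarith
  have hsq : (u j - S) ^ 2 ≤ 0 := by linarith
  have := sq_nonneg (u j - S)
  have hz : (u j - S) ^ 2 = 0 := le_antisymm hsq this
  have := pow_eq_zero_iff (n := 2) (by norm_num) |>.mp hz
  linarith [this]
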